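/- arXiv:2405.14273 — 2 statements merged into one kernel-verified Lean document; each statement's English description precedes it below -/
import Mathlib

section
/- With Y⁽ⁿ⁾ finite nonempty subsets of ℝ^d and a⁽ⁿ⁾ ∈ Y⁽ⁿ⁾, the function ℓ_sub(φ) = (1/N) Σₙ (max_{y∈Y⁽ⁿ⁾} φᵀy − φᵀa⁽ⁿ⁾) is Lipschitz continuous on ℝ^d, with Lipschitz constant (1/N) Σₙ max_{y₁,y₂∈Y⁽ⁿ⁾} ‖y₁ − y₂‖. -/
open scoped RealInnerProductSpace

lemma aux_one_side {d : ℕ} (S : Finset (EuclideanSpace ℝ (Fin d))) (hS : S.Nonempty)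
    (a : EuclideanSpace ℝ (Fin d)) (ha : a ∈ S) (φ ψ : EuclideanSpace ℝ (Fin d)) :
    (S.sup' hS (fun y => ⟪φ, y⟫) - ⟪φ, a⟫) - (S.sup' hS (fun y => ⟪ψ, y⟫) - ⟪ψ, a⟫)
      ≤ ((S ×ˢ S).sup' (hS.product hS) (fun p => ‖p.1 - p.2‖)) * ‖φ - ψ‖ := by
  obtain ⟨y, hy, hmax⟩ := S.exists_mem_eq_sup' hS (fun y => ⟪φ, y⟫)
  have h1 : ⟪ψ, y⟫ ≤ S.sup' hS (fun y => ⟪ψ, y⟫) := Finset.le_sup' _ hy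
  have h2 : (S.sup' hS (fun y => ⟪φ, y⟫) - ⟪φ, a⟫) - (S.sup' hS (fun y => ⟪ψ, y⟫) - ⟪ψ, a⟫)
      ≤ ⟪φ - ψ, y - a⟫ := by
    have heq : ⟪φ - ψ, y - a⟫ = (⟪φ, y⟫ - ⟪φ, a⟫) - (⟪ψ, y⟫ - ⟪ψ, a⟫) := by
      rw [inner_sub_left, inner_sub_right, inner_sub_right]
    rw [hmax, heq]
    linarith
  have h3 : ⟪φ - ψ, y - a⟫ ≤ ‖φ - ψ‖ * ‖y - a‖ := real_inner_le_norm _ _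
  have hmem : (y, a) ∈ S ×ˢ S := Finset.mem_product.2 ⟨hy, ha⟩
  have h4 : ‖y - a‖ ≤ (S ×ˢ S).sup' (hS.product hS) (fun p => ‖p.1 - p.2‖) :=
    Finset.le_sup' (fun p : EuclideanSpace ℝ (Fin d) × EuclideanSpace ℝ (Fin d) => ‖p.1 - p.2‖) hmem
  calc (S.sup' hS (fun y => ⟪φ, y⟫) - ⟪φ, a⟫) - (S.sup' hS (fun y => ⟪ψ, y⟫) - ⟪ψ, a⟫)
      ≤ ⟪φ - ψ, y - a⟫ := h2
    _ ≤ ‖φ - ψ‖ * ‖y - a‖ := h3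
    _ ≤ ((S ×ˢ S).sup' (hS.product hS) (fun p => ‖p.1 - p.2‖)) * ‖φ - ψ‖ := by
        rw [mul_comm ‖φ - ψ‖ ‖y - a‖]
        exact mul_le_mul_of_nonneg_right h4 (norm_nonneg (φ - ψ))

lemma aux_abs {d : ℕ} (S : Finset (EuclideanSpace ℝ (Fin d))) (hS : S.Nonempty)
    (a : EuclideanSpace ℝ (Fin d)) (ha : a ∈ S) (φ ψ : EuclideanSpace ℝ (Fin d)) :
    |(S.sup' hS (fun y => ⟪φ, y⟫) - ⟪φ, a⟫) - (S.sup' hS (fun y => ⟪ψ, y⟫) - ⟪ψ, a⟫)|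
      ≤ ((S ×ˢ S).sup' (hS.product hS) (fun p => ‖p.1 - p.2‖)) * ‖φ - ψ‖ := by
  rw [abs_sub_le_iff]
  refine ⟨aux_one_side S hS a ha φ ψ, ?_⟩
  have h := aux_one_side S hS a ha ψ φ
  rwa [norm_sub_rev] at h

/-- The suboptimality loss is Lipschitz with constant (1/N) Σₙ max_{y₁,y₂∈Yⁿ} ‖y₁-y₂‖. -/
theorem stmt_1 {d N : ℕ} (hN : 0 < N)
    (Y : Fin N → Finset (EuclideanSpace ℝ (Fin d)))
    (hY : ∀ n, (Y n).Nonempty)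
    (a : Fin N → EuclideanSpace ℝ (Fin d)) (ha : ∀ n, a n ∈ Y n) :
    ∀ φ ψ : EuclideanSpace ℝ (Fin d),
      |((1 / N : ℝ) * ∑ n, ((Y n).sup' (hY n) (fun y => ⟪φ, y⟫) - ⟪φ, a n⟫))
        - ((1 / N : ℝ) * ∑ n, ((Y n).sup' (hY n) (fun y => ⟪ψ, y⟫) - ⟪ψ, a n⟫))|
      ≤ ((1 / N : ℝ) * ∑ n, ((Y n) ×ˢ (Y n)).sup' ((hY n).product (hY n))
            (fun p => ‖p.1 - p.2‖)) * ‖φ - ψ‖ := by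
  intro φ ψ
  have hNpos : (0:ℝ) < N := by exact_mod_cast hN
  rw [← mul_sub, ← Finset.sum_sub_distrib, abs_mul, mul_assoc]
  have habs : |(1 / N : ℝ)| = 1 / N := abs_of_pos (by positivity)
  rw [habs]
  refine mul_le_mul_of_nonneg_left ?_ (by positivity)
  calc |∑ n, (((Y n).sup' (hY n) (fun y => ⟪φ, y⟫) - ⟪φ, a n⟫)
          - ((Y n).sup' (hY n) (fun y => ⟪ψ, y⟫) - ⟪ψ, a n⟫))|
      ≤ ∑ n, |((Y n).sup' (hY n) (fun y => ⟪φ, y⟫) - ⟪φ, a n⟫)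
          - ((Y n).sup' (hY n) (fun y => ⟪ψ, y⟫) - ⟪ψ, a n⟫)| :=
        Finset.abs_sum_le_sum_abs _ _
    _ ≤ ∑ n, ((Y n ×ˢ Y n).sup' ((hY n).product (hY n)) (fun p => ‖p.1 - p.2‖)) * ‖φ - ψ‖ :=
        Finset.sum_le_sum fun n _ => aux_abs (Y n) (hY n) (a n) (ha n) φ ψ
    _ = (∑ n, (Y n ×ˢ Y n).sup' ((hY n).product (hY n)) (fun p => ‖p.1 - p.2‖)) * ‖φ - ψ‖ := by
        rw [Finset.sum_mul]
end

section
/- Let γ > 0 and suppose nonnegative reals (r_j) satisfy r_1 ≤ √2 and r_{j+1}² ≤ r_j² − (γ/2)j^{−1/2} + j^{−1} for all j ≥ 1 with r_j > 0. If k ≥ max((2(2+γ)/γ)², (8 log(2/γ)/γ)², 16e²), then r_k = 0 (i.e., the assumption r_j > 0 for all j ≤ k leads to a contradiction). -/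
open Real Finset

lemma exp_cubic_bound {x : ℝ} (h0 : 0 ≤ x) (h1 : x ≤ 1) :
    Real.exp x ≤ 1 + x + x ^ 2 / 2 + 2 / 9 * x ^ 3 := by
  have hb := Real.exp_bound (x := x) (by rwa [abs_of_nonneg h0]) (n := 3) (by norm_num)
  rw [abs_of_nonneg h0] at hb
  have hs : ∑ m ∈ Finset.range 3, x ^ m / (m.factorial : ℝ) = 1 + x + x ^ 2 / 2 := by
    rw [Finset.sum_range_succ, Finset.sum_range_succ, Finset.sum_range_succ]
    norm_num [Nat.factorial]
  rw [hs] at hb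
  have h2 := (abs_le.1 hb).2
  norm_num [Nat.factorial] at h2
  linarith

lemma harm_bound {j : ℕ} (hj : 1 ≤ j) :
    ((j : ℝ))⁻¹ ≤ Real.log ((j : ℝ) + 1/2) - Real.log ((j : ℝ) - 1/2) := by
  have hj1 : (1 : ℝ) ≤ (j : ℝ) := by exact_mod_cast hj
  have hjpos : (0 : ℝ) < j := by linarith
  set x : ℝ := ((j : ℝ))⁻¹ with hx
  have hx0 : 0 < x := by positivity
  have hx1 : x ≤ 1 := by rw [hx]; exact inv_le_one_of_one_le₀ hj1
  have he := exp_cubic_bound hx0.le hx1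
  have hratio : 1 + x + x ^ 2 / 2 + 2 / 9 * x ^ 3 ≤ (2 + x) / (2 - x) := by
    rw [le_div_iff₀ (by linarith)]
    nlinarith [pow_pos hx0 3, pow_pos hx0 4]
  have hrr : (2 + x) / (2 - x) = ((j : ℝ) + 1/2) / ((j : ℝ) - 1/2) := by
    have h2x : (2 : ℝ) - x ≠ 0 := by nlinarith
    have hj12 : ((j : ℝ)) - 1/2 ≠ 0 := by intro h; nlinarith
    rw [div_eq_div_iff h2x hj12, hx]
    field_simp
  have hpos2 : (0 : ℝ) < ((j : ℝ) + 1/2) / ((j : ℝ) - 1/2) := by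
    apply div_pos <;> linarith
  have hfin : x ≤ Real.log (((j : ℝ) + 1/2) / ((j : ℝ) - 1/2)) := by
    rw [Real.le_log_iff_exp_le hpos2]
    calc Real.exp x ≤ 1 + x + x ^ 2 / 2 + 2 / 9 * x ^ 3 := he
    _ ≤ (2 + x) / (2 - x) := hratio
    _ = _ := hrr
  rwa [Real.log_div (by linarith) (by linarith)] at hfin

lemma sqrt_telescope {x : ℝ} (hx : 1 ≤ x) :
    2 * (Real.sqrt (x + 3/4) - Real.sqrt (x - 1/4)) ≤ (Real.sqrt x)⁻¹ := by
  set a := Real.sqrt (x + 3/4) with hA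
  set b := Real.sqrt (x - 1/4) with hB
  set c := Real.sqrt x with hC
  have ha : a ^ 2 = x + 3/4 := Real.sq_sqrt (by linarith)
  have hb : b ^ 2 = x - 1/4 := Real.sq_sqrt (by linarith)
  have hc : c ^ 2 = x := Real.sq_sqrt (by linarith)
  have ha0 : 0 ≤ a := Real.sqrt_nonneg _
  have hb0 : 0 ≤ b := Real.sqrt_nonneg _
  have hc0 : 0 < c := Real.sqrt_pos.2 (by linarith)
  have hab : 2 * c ≤ a + b := by
    nlinarith [sq_nonneg (a - b), sq_nonneg (a + b - 2*c), sq_nonneg (a+b)]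
  have h1 : (a - b) * (a + b) = 1 := by nlinarith
  have key : 2 * (a - b) * c ≤ 1 := by
    nlinarith [mul_pos hc0 (show (0:ℝ) < a + b by linarith)]
  rw [show (Real.sqrt x)⁻¹ = 1 / c by rw [one_div], le_div_iff₀ hc0]
  linarith [key]

lemma crux : (1.6598 : ℝ) / Real.exp 1 + 4 * Real.log 2 < 5/2 + Real.log (5/2) := by
  have he9 : (2.7182818283 : ℝ) < Real.exp 1 := Real.exp_one_gt_d9
  have he0 : (0:ℝ) < Real.exp 1 := by linarith
  have hl2u : Real.log 2 < 0.6931471808 := Real.log_two_lt_d9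
  have hl2l : (0.6931471803:ℝ) < Real.log 2 := Real.log_two_gt_d9
  have h54 : (2/9 : ℝ) ≤ Real.log (5/4) := by
    rw [Real.le_log_iff_exp_le (by norm_num)]
    calc Real.exp (2/9) ≤ 1 + 2/9 + (2/9:ℝ) ^ 2 / 2 + 2/9 * (2/9:ℝ) ^ 3 :=
        exp_cubic_bound (by norm_num) (by norm_num)
    _ ≤ 5/4 := by norm_num
  have h52 : Real.log (5/2) = Real.log 2 + Real.log (5/4) := by
    rw [show (5/2:ℝ) = 2 * (5/4) by norm_num, Real.log_mul (by norm_num) (by norm_num)]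
  have hE : (1.6598:ℝ)/Real.exp 1 < 0.61066 := by
    rw [div_lt_iff₀ he0]; nlinarith
  rw [h52]; linarith

set_option maxHeartbeats 1000000 in
/-- Finite-iteration termination: if r₁ ≤ √2 and the decrement inequality holds at every
positive index, then positivity of r_j for all 1 ≤ j ≤ k contradicts
k ≥ max((2(2+γ)/γ)², (8 log(2/γ)/γ)², 16e²). -/
theorem stmt_17 (γ : ℝ) (hγ : 0 < γ) (r : ℕ → ℝ) (hr0 : ∀ j, 0 ≤ r j)
    (hr1 : r 1 ≤ Real.sqrt 2)
    (hrec : ∀ j, 1 ≤ j → 0 < r j →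
      r (j + 1) ^ 2 ≤ r j ^ 2 - γ / 2 * (Real.sqrt j)⁻¹ + ((j : ℝ))⁻¹)
    (k : ℕ)
    (hk : (k : ℝ) ≥ max (max ((2 * (2 + γ) / γ) ^ 2) ((8 * Real.log (2 / γ) / γ) ^ 2))
      (16 * Real.exp 1 ^ 2))
    (hpos : ∀ j, 1 ≤ j → j ≤ k → 0 < r j) :
    False := by
  have he9 : (2.7182818283 : ℝ) < Real.exp 1 := Real.exp_one_gt_d9
  have he0 : (0:ℝ) < Real.exp 1 := by linarith
  -- k is large
  have hk16 : (16 : ℝ) * Real.exp 1 ^ 2 ≤ (k : ℝ) := le_of_max_le_right hk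
  have hkB : (8 * Real.log (2 / γ) / γ) ^ 2 ≤ (k : ℝ) :=
    le_trans (le_max_right _ _) (le_of_max_le_left hk)
  have hk118 : (118 : ℝ) ≤ (k : ℝ) := by nlinarith
  have hk3 : 3 ≤ k := by exact_mod_cast (show (3:ℝ) ≤ (k:ℝ) by linarith)
  -- step 1 : telescoping
  have key : ∀ n, 1 ≤ n → n ≤ k →
      r n ^ 2 ≤ r 1 ^ 2 - ∑ j ∈ Finset.Ico 1 n, (γ / 2 * (Real.sqrt j)⁻¹ - ((j : ℝ))⁻¹) := by
    intro n
    induction n with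
    | zero => omega
    | succ m ih =>
      intro _ hmk
      rcases Nat.eq_zero_or_pos m with hm0 | hm1
      · subst hm0; simp
      · have hsum := Finset.sum_Ico_succ_top hm1
          (fun j => γ / 2 * (Real.sqrt j)⁻¹ - ((j : ℝ))⁻¹)
        have hih := ih hm1 (by omega)
        have hstep := hrec m hm1 (hpos m hm1 (by omega))
        rw [hsum]
        have : r (m+1) ^ 2 ≤ r m ^ 2 - (γ / 2 * (Real.sqrt m)⁻¹ - ((m : ℝ))⁻¹) := by
          have := hrec m hm1 (hpos m hm1 (by omega)); linarith
        linarith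
  -- step 2 : sum is at most 2
  have hr1sq : r 1 ^ 2 ≤ 2 := by
    have h2 : Real.sqrt 2 ^ 2 = 2 := Real.sq_sqrt (by norm_num)
    nlinarith [hr0 1, Real.sqrt_nonneg 2]
  have hsum2 : ∑ j ∈ Finset.Ico 1 k, (γ / 2 * (Real.sqrt j)⁻¹ - ((j : ℝ))⁻¹) ≤ 2 := by
    have := key k (by omega) le_rfl
    nlinarith [sq_nonneg (r k)]
  -- step 3 : split and telescope
  set g : ℕ → ℝ := fun j => γ * Real.sqrt ((j : ℝ) - 1/4) - Real.log ((j : ℝ) - 1/2) with hg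
  have htele : ∑ j ∈ Finset.Ico 3 k, (g (j+1) - g j) = g k - g 3 := by
    rw [Finset.sum_Ico_eq_sub _ hk3, Finset.sum_range_sub, Finset.sum_range_sub]
    ring
  have hptwise : ∑ j ∈ Finset.Ico 3 k, (g (j+1) - g j)
      ≤ ∑ j ∈ Finset.Ico 3 k, (γ / 2 * (Real.sqrt j)⁻¹ - ((j : ℝ))⁻¹) := by
    apply Finset.sum_le_sum
    intro j hj
    have hj3 : 3 ≤ j := (Finset.mem_Ico.1 hj).1
    have hj1 : (1 : ℝ) ≤ (j : ℝ) := by exact_mod_cast le_trans (by norm_num) hj3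
    have hs := sqrt_telescope hj1
    have hh := harm_bound (j := j) (by omega)
    have hcast : ((j + 1 : ℕ) : ℝ) = (j : ℝ) + 1 := by push_cast; ring
    rw [hg]
    simp only [hcast]
    have e1 : (j : ℝ) + 1 - 1/4 = (j : ℝ) + 3/4 := by ring
    have e2 : (j : ℝ) + 1 - 1/2 = (j : ℝ) + 1/2 := by ring
    rw [e1, e2]
    nlinarith [hs, hh]
  have hsplit : ∑ j ∈ Finset.Ico (1:ℕ) 3, (γ / 2 * (Real.sqrt j)⁻¹ - ((j : ℝ))⁻¹)
      + ∑ j ∈ Finset.Ico 3 k, (γ / 2 * (Real.sqrt j)⁻¹ - ((j : ℝ))⁻¹)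
      = ∑ j ∈ Finset.Ico 1 k, (γ / 2 * (Real.sqrt j)⁻¹ - ((j : ℝ))⁻¹) :=
    Finset.sum_Ico_consecutive _ (by omega) hk3
  have hfirst : ∑ j ∈ Finset.Ico (1:ℕ) 3, (γ / 2 * (Real.sqrt j)⁻¹ - ((j : ℝ))⁻¹)
      = (γ / 2 - 1) + (γ / 2 * (Real.sqrt 2)⁻¹ - 1/2) := by
    have : Finset.Ico (1:ℕ) 3 = {1, 2} := by decide
    rw [this]
    rw [Finset.sum_insert (by decide), Finset.sum_singleton]
    norm_num [Real.sqrt_one]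
  -- assemble the main analytic inequality
  set E := Real.exp 1 with hE
  set s := Real.sqrt k with hsdef
  have hknn : (0:ℝ) ≤ (k:ℝ) := by positivity
  have hs2 : s ^ 2 = (k:ℝ) := Real.sq_sqrt hknn
  have hs4e : 4 * E ≤ s := by
    calc 4 * E = Real.sqrt ((4*E)^2) := (Real.sqrt_sq (by positivity)).symm
    _ = Real.sqrt (16 * E^2) := by ring_nf
    _ ≤ s := Real.sqrt_le_sqrt hk16
  have hs0 : (0:ℝ) < s := by linarith
  have hs10 : (10:ℝ) ≤ s := by linarith
  have ht : s - 1/40 ≤ Real.sqrt ((k:ℝ) - 1/4) := by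
    rw [Real.le_sqrt' (by linarith)]
    have expand : (s - 1/40)^2 = s^2 - s/20 + 1/1600 := by ring
    rw [expand, hs2]
    linarith
  have hlogk : Real.log ((k:ℝ) - 1/2) ≤ 2 * Real.log s := by
    have h1 : (k:ℝ) - 1/2 ≤ s ^ 2 := by rw [hs2]; linarith
    calc Real.log ((k:ℝ) - 1/2) ≤ Real.log (s ^ 2) := Real.log_le_log (by linarith) h1
    _ = 2 * Real.log s := by rw [Real.log_pow]; norm_num
  have h11 : Real.sqrt (11/4) ≤ 1.6584 := by
    linarith [Real.sq_sqrt (show (0:ℝ) ≤ 11/4 by norm_num), Real.sqrt_nonneg (11/4:ℝ),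
      sq_nonneg (Real.sqrt (11/4) - 1.6584)]
  have hi2 : (0.7071:ℝ) ≤ (Real.sqrt 2)⁻¹ := by
    have hs2' : Real.sqrt 2 ≤ 1.41422 := by
      linarith [Real.sq_sqrt (show (0:ℝ) ≤ 2 by norm_num), Real.sqrt_nonneg (2:ℝ),
        sq_nonneg (Real.sqrt 2 - 1.41422)]
    have h0 : (0:ℝ) < Real.sqrt 2 := Real.sqrt_pos.2 (by norm_num)
    rw [show (Real.sqrt 2)⁻¹ = 1/Real.sqrt 2 from (one_div _).symm, le_div_iff₀ h0]
    linarith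
  -- main inequality
  have hmain : γ * s ≤ 7/2 - Real.log (5/2) + 2 * Real.log s + γ * 0.8299 := by
    have h0 : g k - g 3 ≤ ∑ j ∈ Finset.Ico 3 k, (γ / 2 * (Real.sqrt j)⁻¹ - ((j : ℝ))⁻¹) :=
      htele ▸ hptwise
    have hgk : g k = γ * Real.sqrt ((k:ℝ) - 1/4) - Real.log ((k:ℝ) - 1/2) := rfl
    have hg3 : g 3 = γ * Real.sqrt (11/4) - Real.log (5/2) := by
      rw [hg]
      norm_num
    rw [hgk, hg3] at h0
    have p1 : γ * (s - 1/40) ≤ γ * Real.sqrt ((k:ℝ) - 1/4) :=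
      mul_le_mul_of_nonneg_left ht hγ.le
    have p2 : γ * Real.sqrt (11/4) ≤ γ * 1.6584 := mul_le_mul_of_nonneg_left h11 hγ.le
    have p3 : γ * 0.7071 ≤ γ * (Real.sqrt 2)⁻¹ := mul_le_mul_of_nonneg_left hi2 hγ.le
    linarith [hsum2, hsplit, hfirst, h0, hlogk, p1, p2, p3, hγ.le]
  -- case split on γ vs 2/e
  rcases le_or_gt 2 (γ * E) with hcase | hcase
  · -- large γ
    have hlog4e : Real.log (4 * E) = 2 * Real.log 2 + 1 := by
      rw [hE, Real.log_mul (by norm_num) (Real.exp_ne_zero 1), Real.log_exp,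
        show (4:ℝ) = 2^2 by norm_num, Real.log_pow]
      push_cast; ring
    have htan : Real.log s - Real.log (4*E) ≤ (s - 4*E)/(4*E) := by
      have h := Real.log_le_sub_one_of_pos (show (0:ℝ) < s/(4*E) by positivity)
      rw [Real.log_div (ne_of_gt hs0) (by positivity)] at h
      rw [div_sub_one (show (4*E:ℝ) ≠ 0 by positivity)] at h
      exact h
    have hq : (s - 4*E)/(4*E) ≤ γ * (s - 4*E) / 8 := by
      rw [div_le_div_iff₀ (by positivity) (by norm_num)]
      have hint := mul_nonneg (sub_nonneg.2 hs4e) (show (0:ℝ) ≤ γ * E - 2 by linarith)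
      linarith [hint]
    -- combine : 2 log s ≤ 4 log 2 + 2 + γ(s-4E)/4
    have h2ls : 2 * Real.log s ≤ 4 * Real.log 2 + 2 + γ * (s - 4*E) / 4 := by
      have := htan.trans hq
      rw [hlog4e] at this
      linarith
    have hfin : γ * (4*E - 0.8299) ≤ 11/2 - Real.log (5/2) + 4 * Real.log 2 := by
      linarith [hmain, h2ls, mul_le_mul_of_nonneg_left hs4e hγ.le]
    have h2E : 2/E ≤ γ := by rw [div_le_iff₀ he0]; linarith
    have hEb : (0:ℝ) < 4*E - 0.8299 := by linarith
    have := mul_le_mul_of_nonneg_right h2E hEb.le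
    have hid : (2/E) * (4*E - 0.8299) = 8 - 1.6598/E := by
      field_simp; ring
    rw [hid] at this
    have hcrux := crux
    linarith
  · -- small γ
    set L := Real.log (2/γ) with hLdef
    have hL1 : (1:ℝ) ≤ L := by
      have h2γ : E ≤ 2/γ := by rw [le_div_iff₀ hγ]; linarith
      calc (1:ℝ) = Real.log E := (Real.log_exp 1).symm
      _ ≤ L := Real.log_le_log (Real.exp_pos 1) h2γ
    set B := 8 * L / γ with hBdef
    have hBpos : (0:ℝ) < B := by
      apply div_pos (by linarith) hγ
    have hγB : γ * B = 8 * L := by rw [hBdef]; field_simp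
    have hsB : B ≤ s := by
      calc B = Real.sqrt (B^2) := (Real.sqrt_sq hBpos.le).symm
      _ = Real.sqrt ((8 * Real.log (2/γ) / γ)^2) := by rw [hBdef]
      _ ≤ s := Real.sqrt_le_sqrt hkB
    have htan : Real.log s - Real.log B ≤ (s - B)/B := by
      have h := Real.log_le_sub_one_of_pos (show (0:ℝ) < s/B by positivity)
      rw [Real.log_div (ne_of_gt hs0) (ne_of_gt hBpos)] at h
      rw [div_sub_one (ne_of_gt hBpos)] at h
      exact h
    have hq : (s - B)/B ≤ γ * (s - B) / 8 := by
      rw [div_le_div_iff₀ hBpos (by norm_num)]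
      have e : γ * (s - B) * B = 8 * L * (s - B) := by
        rw [show γ * (s - B) * B = (γ * B) * (s - B) by ring, hγB]
      have hint := mul_nonneg (sub_nonneg.2 hsB) (show (0:ℝ) ≤ L - 1 by linarith)
      linarith [e, hint]
    have hlogB : Real.log B = 2 * Real.log 2 + L + Real.log L := by
      rw [hBdef, Real.log_div (by positivity) (ne_of_gt hγ), Real.log_mul (by norm_num)
        (by nlinarith), show (8:ℝ) = 2^3 by norm_num, Real.log_pow]
      have hlogγ : Real.log γ = Real.log 2 - L := by
        rw [hLdef, Real.log_div (by norm_num) (ne_of_gt hγ)]; ring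
      rw [hlogγ]
      push_cast; ring
    have hlogL : Real.log L ≤ L - 1 := Real.log_le_sub_one_of_pos (by linarith)
    have h2ls : 2 * Real.log s ≤ 4 * Real.log 2 + 4 * L - 2 + γ * (s - B) / 4 := by
      have := htan.trans hq
      rw [hlogB] at this
      linarith
    have hfin : 8 * L ≤ 7/2 - Real.log (5/2) + 4 * Real.log 2 + 4*L - 2 + γ * 0.8299 := by
      linarith [hmain, h2ls, mul_le_mul_of_nonneg_left hsB hγ.le, hγB]
    have hγE : γ ≤ 2/E := by rw [le_div_iff₀ he0]; linarith
    have hγ8 : γ * 0.8299 ≤ 1.6598 / E := by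
      rw [le_div_iff₀ he0]; linarith
    have hcrux := crux
    linarith
end
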